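/- Let P^n be a probability mass function on a finite grid, updated by P^{n+1} ∝ Λ^{n+1} P^n with Λ^{n+1}(κ_ℓ) ∈ {α, 1}, α ∈ (0,1), where for every ℓ ∉ S the value α is applied at infinitely many steps n and for every ℓ ∈ S the value 1 is applied at all steps. If P^0(κ_ℓ) > 0 for some ℓ ∈ S, then P^n(κ_ℓ) → 0 for every ℓ ∉ S as n → ∞, and the total mass of S converges to 1. -/

import Mathlib

open Finset Filter

/-- If the stabilizing set `S` carries likelihood `1` at every step, every
non-stabilizing parameter is penalized by `α < 1` infinitely often, and the
prior puts positive mass on `S`, then the posterior mass of each non-stabilizing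
parameter tends to `0` and the mass of `S` tends to `1`. -/
theorem two_level_update_concentration (Nk : ℕ) (w : Fin Nk → ℝ)
    (P : ℕ → Fin Nk → ℝ) (Λ : ℕ → Fin Nk → ℝ) (S : Finset (Fin Nk))
    (α : ℝ) (hα0 : 0 < α) (hα1 : α < 1)
    (hw : ∀ ℓ, 0 < w ℓ)
    (hΛval : ∀ n ℓ, Λ n ℓ = α ∨ Λ n ℓ = 1)
    (hΛS : ∀ n, ∀ ℓ ∈ S, Λ n ℓ = 1)
    (hΛoff : ∀ ℓ ∉ S, {n : ℕ | Λ n ℓ = α}.Infinite)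
    (hupd : ∀ n ℓ, P (n + 1) ℓ = Λ n ℓ * P n ℓ / ∑ m, w m * (Λ n m * P n m))
    (hP0 : ∀ ℓ, 0 ≤ P 0 ℓ) (hnorm : ∑ ℓ, w ℓ * P 0 ℓ = 1)
    (hSpos : ∃ ℓ ∈ S, 0 < P 0 ℓ) :
    (∀ ℓ ∉ S, Tendsto (fun n => P n ℓ) atTop (nhds 0)) ∧
      Tendsto (fun n => ∑ ℓ ∈ S, w ℓ * P n ℓ) atTop (nhds 1) := by
  obtain ⟨ℓ₀, hℓ₀S, hℓ₀pos⟩ := hSpos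
  set U : ℕ → Fin Nk → ℝ := fun n ℓ => P 0 ℓ * ∏ k ∈ Finset.range n, Λ k ℓ with hU
  set D : ℕ → ℝ := fun n => ∑ m, w m * U n m with hD
  have hΛpos : ∀ n ℓ, 0 < Λ n ℓ := by
    intro n ℓ; rcases hΛval n ℓ with h | h <;> rw [h]; exacts [hα0, one_pos]
  have hUnn : ∀ n ℓ, 0 ≤ U n ℓ := by
    intro n ℓ
    exact mul_nonneg (hP0 ℓ) (Finset.prod_nonneg fun k _ => (hΛpos k ℓ).le)
  have hUℓ₀ : ∀ n, U n ℓ₀ = P 0 ℓ₀ := by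
    intro n
    simp only [hU]
    rw [Finset.prod_eq_one fun k _ => hΛS k ℓ₀ hℓ₀S, mul_one]
  have hDlb : ∀ n, w ℓ₀ * P 0 ℓ₀ ≤ D n := by
    intro n
    rw [← hUℓ₀ n]
    exact Finset.single_le_sum (fun m _ => mul_nonneg (hw m).le (hUnn n m))
      (Finset.mem_univ ℓ₀)
  have hDpos : ∀ n, 0 < D n := fun n =>
    lt_of_lt_of_le (mul_pos (hw ℓ₀) hℓ₀pos) (hDlb n)
  have hrep : ∀ n ℓ, P n ℓ = U n ℓ / D n := by
    intro n
    induction n with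
    | zero =>
      intro ℓ
      have : D 0 = 1 := by
        simp only [hD, hU]; simpa using hnorm
      simp [this, hU]
    | succ n IH =>
      intro ℓ
      have hE : (∑ m, w m * (Λ n m * P n m)) = D (n + 1) / D n := by
        rw [hD, Finset.sum_div]
        refine Finset.sum_congr rfl fun m _ => ?_
        rw [IH m]
        simp only [hU, Finset.prod_range_succ]
        field_simp
        simp only [hD, hU, mul_assoc]
      rw [hupd n ℓ, hE, IH ℓ]
      have h1 : D n ≠ 0 := (hDpos n).ne'
      have h2 : D (n + 1) ≠ 0 := (hDpos (n + 1)).ne'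
      simp only [hU, Finset.prod_range_succ]
      field_simp
  have hoff : ∀ ℓ ∉ S, Tendsto (fun n => P n ℓ) atTop (nhds 0) := by
    intro ℓ hℓ
    set c : ℕ → ℕ := fun n => ((Finset.range n).filter (fun k => Λ k ℓ = α)).card with hc
    have hprod : ∀ n, ∏ k ∈ Finset.range n, Λ k ℓ = α ^ c n := by
      intro n
      rw [← Finset.prod_filter_mul_prod_filter_not (Finset.range n) (fun k => Λ k ℓ = α)]
      rw [Finset.prod_eq_pow_card (fun k hk => (Finset.mem_filter.1 hk).2),
        Finset.prod_eq_one (fun k hk => ?_), mul_one]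
      rcases hΛval k ℓ with h | h
      · exact absurd h (Finset.mem_filter.1 hk).2
      · exact h
    have hcmono : Monotone c := fun a b hab =>
      Finset.card_le_card (Finset.filter_subset_filter _ (Finset.range_subset_range.2 hab))
    have hctop : Tendsto c atTop atTop := by
      refine tendsto_atTop_atTop_of_monotone hcmono fun N => ?_
      obtain ⟨t, hts, htc⟩ := (hΛoff ℓ hℓ).exists_subset_card_eq N
      refine ⟨t.sup id + 1, ?_⟩
      rw [← htc]
      refine Finset.card_le_card fun k hk => Finset.mem_filter.2 ⟨?_, hts hk⟩
      exact Finset.mem_range.2 (Nat.lt_succ_of_le (Finset.le_sup (f := id) hk))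
    have hbd : ∀ n, P n ℓ ≤ P 0 ℓ * α ^ c n / (w ℓ₀ * P 0 ℓ₀) := by
      intro n
      rw [hrep n ℓ]
      simp only [hU, hprod n]
      gcongr
      · exact mul_nonneg (hP0 ℓ) (pow_nonneg hα0.le _)
      · exact mul_pos (hw ℓ₀) hℓ₀pos
      · exact hDlb n
    have hlim : Tendsto (fun n => P 0 ℓ * α ^ c n / (w ℓ₀ * P 0 ℓ₀)) atTop (nhds 0) := by
      rw [show (0:ℝ) = P 0 ℓ * 0 / (w ℓ₀ * P 0 ℓ₀) by ring]
      exact (Tendsto.const_mul _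
        ((tendsto_pow_atTop_nhds_zero_of_lt_one hα0.le hα1).comp hctop)).div_const _
    refine tendsto_of_tendsto_of_tendsto_of_le_of_le tendsto_const_nhds hlim
      (fun n => by rw [hrep n ℓ]; exact div_nonneg (hUnn n ℓ) (hDpos n).le) hbd
  refine ⟨hoff, ?_⟩
  have htot : ∀ n, ∑ ℓ ∈ S, w ℓ * P n ℓ = 1 - ∑ ℓ ∈ Sᶜ, w ℓ * P n ℓ := by
    intro n
    have h1 : ∑ ℓ, w ℓ * P n ℓ = 1 := by
      simp only [hrep n]
      rw [show (∑ ℓ, w ℓ * (U n ℓ / D n)) = (∑ ℓ, w ℓ * U n ℓ) / D n by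
        rw [Finset.sum_div]; exact Finset.sum_congr rfl fun ℓ _ => (mul_div_assoc _ _ _).symm]
      exact div_self (hDpos n).ne'
    have := Finset.sum_add_sum_compl S (fun ℓ => w ℓ * P n ℓ)
    rw [h1] at this
    linarith
  have hzero : Tendsto (fun n => ∑ ℓ ∈ Sᶜ, w ℓ * P n ℓ) atTop (nhds 0) := by
    rw [show (0:ℝ) = ∑ ℓ ∈ Sᶜ, (0:ℝ) by simp]
    refine tendsto_finset_sum _ fun ℓ hℓ => ?_
    have hℓ' : ℓ ∉ S := by simpa using hℓ
    rw [show (0:ℝ) = w ℓ * 0 by ring]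
    exact (hoff ℓ hℓ').const_mul _
  have h := Tendsto.const_sub (1:ℝ) hzero
  simp only [htot]
  simpa using h
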